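/- Let 𝒳 be a finite set with |𝒳| ≥ 2 and P a pmf on 𝒳 with P(x) > 0 for all x. Let Λ = {ℓ : 𝒳 → ℝ≥0 : Σ_x 2^{−ℓ(x)} ≤ 1} and g_{z,Q,P}(x) = (1 − z²/2)·P(x) + z·√(Q(x)·P(x)). Suppose (z*, Q*) with g_{z*,Q*,P}(x) ≥ 0 for all x maximizes Σ_x g_{z,Q,P}(x) · log₂( (Σ_{x'} g_{z,Q,P}(x')) / g_{z,Q,P}(x) ) over all such feasible pairs, and set P*(x) = g_{z*,Q*,P}(x) / Σ_{x'} g_{z*,Q*,P}(x'). Then the length function ℓ*(x) = log₂(1/P*(x)) is the unique minimizer over Λ of the average-age cost E[ℓ(X)] + E[ℓ(X)²]/(2E[ℓ(X)]) (with X ∼ P). -/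

import Mathlib

open Real Finset Filter

lemma hasDerivAt_quad (p q r : ℝ) : HasDerivAt (fun u : ℝ => p + q*u + r*u^2) q 0 := by
  have h := ((hasDerivAt_const (0:ℝ) p).fun_add ((hasDerivAt_id (0:ℝ)).const_mul q)).fun_add
    ((hasDerivAt_pow 2 (0:ℝ)).const_mul r)
  simpa using h

lemma hasDerivAt_log_quad (p q r : ℝ) (hp : p ≠ 0) :
    HasDerivAt (fun u : ℝ => Real.log (p + q*u + r*u^2)) (q / p) 0 := by
  have h0 : p + q*0 + r*0^2 = p := by ring
  have hl : HasDerivAt Real.log (p + q*0 + r*0^2)⁻¹ (p + q*0 + r*0^2) := by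
    rw [h0]; exact Real.hasDerivAt_log hp
  have := hl.comp 0 (hasDerivAt_quad p q r)
  rw [h0] at this
  simpa [div_eq_inv_mul, Function.comp_def] using this

lemma tendsto_sum_atTop {ι : Type*} {l : Filter ℝ}
    (s : Finset ι) (hs : s.Nonempty) (f : ι → ℝ → ℝ)
    (h : ∀ i ∈ s, Tendsto (f i) l atTop) :
    Tendsto (fun u => ∑ i ∈ s, f i u) l atTop := by
  induction hs using Finset.Nonempty.cons_induction with
  | singleton i => simpa using h i (by simp)
  | cons i t hit ht ih =>
      have h1 : Tendsto (f i) l atTop := h i (by simp)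
      have h2 := ih (fun j hj => h j (by simp [hj]))
      simpa [Finset.sum_cons] using Filter.Tendsto.atTop_add_atTop h1 h2

/-- Derivative at 0 of the relevant sum along a quadratic path. -/
lemma hasDerivAt_F {𝒳 : Type*} (T : Finset 𝒳) (a b c : 𝒳 → ℝ) (A B C : ℝ)
    (hA : A ≠ 0) (ha : ∀ x ∈ T, a x ≠ 0) :
    HasDerivAt (fun u => ∑ x ∈ T, (a x + b x*u + c x*u^2) *
        ((Real.log (A + B*u + C*u^2) - Real.log (a x + b x*u + c x*u^2)) / Real.log 2))
      (∑ x ∈ T, (b x * ((Real.log A - Real.log (a x))/Real.log 2)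
        + a x * ((B/A - b x / a x)/Real.log 2))) 0 := by
  apply HasDerivAt.fun_sum
  intro x hx
  have hq := hasDerivAt_quad (a x) (b x) (c x)
  have hlog1 := hasDerivAt_log_quad A B C hA
  have hlog2 := hasDerivAt_log_quad (a x) (b x) (c x) (ha x hx)
  have hdiff := ((hlog1.fun_sub hlog2).div_const (Real.log 2))
  have := hq.fun_mul hdiff
  convert this using 1
  · rfl
  simp

lemma gibbs {𝒳 : Type*} [Fintype 𝒳] [Nonempty 𝒳] (gs ℓ : 𝒳 → ℝ) (hgs : ∀ x, 0 < gs x)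
    (hKraft : ∑ x, (2:ℝ) ^ (-ℓ x) ≤ 1) :
    ∑ x, gs x * Real.logb 2 ((∑ y, gs y)/gs x) ≤ ∑ x, gs x * ℓ x ∧
    ((∃ x, ℓ x ≠ Real.logb 2 ((∑ y, gs y)/gs x)) →
      ∑ x, gs x * Real.logb 2 ((∑ y, gs y)/gs x) < ∑ x, gs x * ℓ x) := by
  classical
  set S := ∑ y, gs y with hS
  have hS0 : 0 < S := Finset.sum_pos (fun x _ => hgs x) Finset.univ_nonempty
  have hlog2 : (0:ℝ) < Real.log 2 := Real.log_pos (by norm_num)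
  set d : 𝒳 → ℝ := fun x => gs x * ℓ x - gs x * Real.logb 2 (S/gs x)
    - (gs x - S * (2:ℝ) ^ (-ℓ x)) / Real.log 2 with hd
  have hy : ∀ x, 0 < S * (2:ℝ) ^ (-ℓ x) / gs x := fun x =>
    div_pos (mul_pos hS0 (Real.rpow_pos_of_pos (by norm_num) _)) (hgs x)
  have key : ∀ x, d x = gs x / Real.log 2 *
      ((S * (2:ℝ) ^ (-ℓ x) / gs x - 1) - Real.log (S * (2:ℝ) ^ (-ℓ x) / gs x)) := by
    intro x
    have hgx := (hgs x).ne'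
    have h2 : Real.log ((2:ℝ) ^ (-ℓ x)) = -ℓ x * Real.log 2 := Real.log_rpow (by norm_num) _
    have hlogy : Real.log (S * (2:ℝ) ^ (-ℓ x) / gs x)
        = Real.log S + (-ℓ x * Real.log 2) - Real.log (gs x) := by
      rw [Real.log_div (by positivity) hgx, Real.log_mul hS0.ne' (by positivity), h2]
    have hlogb : Real.logb 2 (S/gs x) = (Real.log S - Real.log (gs x)) / Real.log 2 := by
      rw [Real.logb, Real.log_div hS0.ne' hgx]
    rw [hd]
    simp only [hlogy, hlogb]
    field_simp
    ring
  have hd0 : ∀ x, 0 ≤ d x := by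
    intro x
    rw [key x]
    have := Real.log_le_sub_one_of_pos (hy x)
    have hc : 0 ≤ gs x / Real.log 2 := le_of_lt (div_pos (hgs x) hlog2)
    nlinarith [this, hc]
  have hsum_d : ∑ x, d x = (∑ x, gs x * ℓ x) - (∑ x, gs x * Real.logb 2 (S/gs x))
      - (S - S * ∑ x, (2:ℝ) ^ (-ℓ x)) / Real.log 2 := by
    rw [hd]
    simp only [Finset.sum_sub_distrib, ← Finset.sum_div, Finset.sum_sub_distrib]
    rw [← Finset.mul_sum]
  have htail : 0 ≤ (S - S * ∑ x, (2:ℝ) ^ (-ℓ x)) / Real.log 2 := by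
    apply div_nonneg _ hlog2.le
    nlinarith [hKraft, hS0]
  have hsum_d_nonneg : 0 ≤ ∑ x, d x := Finset.sum_nonneg fun x _ => hd0 x
  constructor
  · nlinarith [hsum_d_nonneg, htail, hsum_d]
  · rintro ⟨x0, hx0⟩
    have hdx0 : 0 < d x0 := by
      rw [key x0]
      have hyne : S * (2:ℝ) ^ (-ℓ x0) / gs x0 ≠ 1 := by
        intro h1
        apply hx0
        have h2 : S * (2:ℝ) ^ (-ℓ x0) = gs x0 :=
          (div_eq_one_iff_eq (hgs x0).ne').mp h1
        have : (2:ℝ) ^ (-ℓ x0) = gs x0 / S := by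
          field_simp at h2 ⊢; linarith [h2]
        have h3 : Real.logb 2 ((2:ℝ) ^ (-ℓ x0)) = Real.logb 2 (gs x0 / S) := by rw [this]
        rw [Real.logb_rpow (by norm_num) (by norm_num)] at h3
        have : Real.logb 2 (gs x0 / S) = - Real.logb 2 (S / gs x0) := by
          rw [← Real.logb_inv]
          congr 1
          rw [inv_div]
        rw [this] at h3
        linarith [h3]
      have := Real.log_lt_sub_one_of_pos (hy x0) hyne
      have hc : 0 < gs x0 / Real.log 2 := div_pos (hgs x0) hlog2
      nlinarith [this, hc]
    have hsum_pos : 0 < ∑ x, d x :=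
      Finset.sum_pos' (fun x _ => hd0 x) ⟨x0, Finset.mem_univ x0, hdx0⟩
    nlinarith [hsum_pos, htail, hsum_d]

/-- Cauchy–Schwarz + AM–GM step: cost(ℓ) dominates the linear functional. -/
lemma cost_ge {𝒳 : Type*} [Fintype 𝒳] (P ℓ τ : 𝒳 → ℝ) (hP : ∀ x, 0 < P x)
    (hℓ : ∀ x, 0 ≤ ℓ x) (hτ : ∀ x, 0 ≤ τ x) (hm : 0 < ∑ x, P x * ℓ x) :
    ∑ x, (P x * (1 - (∑ y, P y * τ y^2)/2 + τ x)) * ℓ x ≤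
      (∑ x, P x * ℓ x) + (∑ x, P x * ℓ x^2)/(2 * ∑ x, P x * ℓ x) := by
  classical
  set m := ∑ x, P x * ℓ x with hmdef
  set s2 := ∑ x, P x * ℓ x^2 with hs2def
  set q := ∑ y, P y * τ y^2 with hqdef
  have hq0 : 0 ≤ q := Finset.sum_nonneg fun y _ => mul_nonneg (hP y).le (sq_nonneg _)
  have hs20 : 0 ≤ s2 := Finset.sum_nonneg fun y _ => mul_nonneg (hP y).le (sq_nonneg _)
  have hexp : ∑ x, (P x * (1 - q/2 + τ x)) * ℓ x
      = (1 - q/2) * m + ∑ x, P x * τ x * ℓ x := by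
    rw [hmdef, Finset.mul_sum, ← Finset.sum_add_distrib]
    congr 1; funext x; ring
  have hCS : (∑ x, P x * τ x * ℓ x)^2 ≤ q * s2 := by
    have h := Finset.sum_mul_sq_le_sq_mul_sq Finset.univ
      (fun x => Real.sqrt (P x) * τ x) (fun x => Real.sqrt (P x) * ℓ x)
    have e1 : ∀ x : 𝒳, (Real.sqrt (P x) * τ x) * (Real.sqrt (P x) * ℓ x) = P x * τ x * ℓ x := by
      intro x
      have hx : Real.sqrt (P x) * Real.sqrt (P x) = P x := Real.mul_self_sqrt (hP x).le
      linear_combination (τ x * ℓ x) * hx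
    have e2 : ∀ x : 𝒳, (Real.sqrt (P x) * τ x)^2 = P x * τ x^2 := by
      intro x
      have hx : Real.sqrt (P x) ^2 = P x := Real.sq_sqrt (hP x).le
      linear_combination (τ x^2) * hx
    have e3 : ∀ x : 𝒳, (Real.sqrt (P x) * ℓ x)^2 = P x * ℓ x^2 := by
      intro x
      have hx : Real.sqrt (P x) ^2 = P x := Real.sq_sqrt (hP x).le
      linear_combination (ℓ x^2) * hx
    simp only [e1, e2, e3] at h
    exact h
  have hlin0 : 0 ≤ ∑ x, P x * τ x * ℓ x :=
    Finset.sum_nonneg fun x _ => mul_nonneg (mul_nonneg (hP x).le (hτ x)) (hℓ x)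
  have hB : 0 ≤ q*m^2 + s2 := add_nonneg (mul_nonneg hq0 (sq_nonneg m)) hs20
  have hA0 : 0 ≤ (∑ x, P x * τ x * ℓ x) * (2*m) := mul_nonneg hlin0 (by linarith)
  have hsq : ((∑ x, P x * τ x * ℓ x) * (2*m))^2 ≤ (q*m^2 + s2)^2 := by
    nlinarith [hCS, mul_pos hm hm, sq_nonneg (q*m^2 - s2)]
  have hkey2 : (∑ x, P x * τ x * ℓ x) * (2*m) ≤ q*m^2 + s2 :=
    (pow_le_pow_iff_left₀ hA0 hB (by norm_num)).mp hsq
  rw [hexp]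
  have hw : s2/(2*m)*(2*m) = s2 := by field_simp
  nlinarith [hkey2, hm, hw, mul_pos hm hm]

set_option maxHeartbeats 4000000 in
theorem stmt_8 {𝒳 : Type*} [Fintype 𝒳] (hcard : 2 ≤ Fintype.card 𝒳)
    (P : 𝒳 → ℝ) (hP : ∀ x, 0 < P x) (hPsum : ∑ x, P x = 1)
    (g : ℝ → (𝒳 → ℝ) → 𝒳 → ℝ)
    (hg : g = fun z Q x => (1 - z ^ 2 / 2) * P x + z * Real.sqrt (Q x * P x))
    (zs : ℝ) (Qs : 𝒳 → ℝ) (hzs : 0 ≤ zs) (hQs : ∀ x, 0 ≤ Qs x) (hQssum : ∑ x, Qs x = 1)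
    (hfeas : ∀ x, 0 ≤ g zs Qs x)
    (hmax : ∀ (z : ℝ) (Q : 𝒳 → ℝ), 0 ≤ z → (∀ x, 0 ≤ Q x) → (∑ x, Q x = 1) →
      (∀ x, 0 ≤ g z Q x) →
      (∑ x, g z Q x * Real.logb 2 ((∑ x', g z Q x') / g z Q x)) ≤
        ∑ x, g zs Qs x * Real.logb 2 ((∑ x', g zs Qs x') / g zs Qs x))
    (Pstar : 𝒳 → ℝ) (hPstar : Pstar = fun x => g zs Qs x / ∑ x', g zs Qs x')
    (ℓstar : 𝒳 → ℝ) (hℓstar : ℓstar = fun x => Real.logb 2 (1 / Pstar x)) :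
    ((∀ x, 0 ≤ ℓstar x) ∧ (∑ x, (2 : ℝ) ^ (-ℓstar x) ≤ 1)) ∧
    (∀ ℓ : 𝒳 → ℝ, (∀ x, 0 ≤ ℓ x) → (∑ x, (2 : ℝ) ^ (-ℓ x) ≤ 1) →
      ((∑ x, P x * ℓstar x) + (∑ x, P x * ℓstar x ^ 2) / (2 * ∑ x, P x * ℓstar x) ≤
        (∑ x, P x * ℓ x) + (∑ x, P x * ℓ x ^ 2) / (2 * ∑ x, P x * ℓ x)) ∧
      ((∑ x, P x * ℓ x) + (∑ x, P x * ℓ x ^ 2) / (2 * ∑ x, P x * ℓ x) =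
          (∑ x, P x * ℓstar x) + (∑ x, P x * ℓstar x ^ 2) / (2 * ∑ x, P x * ℓstar x) →
        ℓ = ℓstar)) := by
  classical
  have hNe : Nonempty 𝒳 := Fintype.card_pos_iff.mp (by omega)
  have hlog2 : (0:ℝ) < Real.log 2 := Real.log_pos (by norm_num)
  have hg2 : ∀ z (Q : 𝒳 → ℝ) x, g z Q x = (1 - z ^ 2 / 2) * P x + z * Real.sqrt (Q x * P x) := by
    intro z Q x; rw [hg]
  -- each P x < 1
  have hP1 : ∀ x, P x < 1 := by
    intro x
    obtain ⟨y, hy⟩ := Fintype.exists_ne_of_one_lt_card (by omega) x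
    have hsub : ({x, y} : Finset 𝒳) ⊆ Finset.univ := Finset.subset_univ _
    have hxy : P x + P y ≤ ∑ z, P z := by
      have := Finset.sum_le_sum_of_subset_of_nonneg hsub
        (fun z _ _ => (hP z).le)
      rwa [Finset.sum_pair (Ne.symm hy)] at this
    have := hP y
    rw [hPsum] at hxy
    linarith
  -- Step A : S > 0
  have hS0 : 0 < ∑ x', g zs Qs x' := by
    rcases (Finset.sum_nonneg (fun x _ => hfeas x)).lt_or_eq with h | h
    · exact h
    exfalso
    have hall : ∀ x, g zs Qs x = 0 := by
      intro x
      have := (Finset.sum_eq_zero_iff_of_nonneg (fun x _ => hfeas x)).mp h.symm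
      exact this x (Finset.mem_univ x)
    have hg0 : ∀ x, g 0 Qs x = P x := by
      intro x; rw [hg2]; norm_num
    have h1 := hmax 0 Qs le_rfl hQs hQssum (fun x => by rw [hg0]; exact (hP x).le)
    have hL : ∑ x, g 0 Qs x * Real.logb 2 ((∑ x', g 0 Qs x') / g 0 Qs x)
        = ∑ x, P x * Real.logb 2 (1 / P x) := by
      apply Finset.sum_congr rfl
      intro x _
      simp only [hg0, hPsum]
    have hR : ∑ x, g zs Qs x * Real.logb 2 ((∑ x', g zs Qs x') / g zs Qs x) = 0 := by
      apply Finset.sum_eq_zero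
      intro x _
      rw [hall x, zero_mul]
    have hpos : 0 < ∑ x, P x * Real.logb 2 (1 / P x) := by
      apply Finset.sum_pos _ Finset.univ_nonempty
      intro x _
      apply mul_pos (hP x)
      apply Real.logb_pos (by norm_num)
      rw [lt_div_iff₀ (hP x)]
      simpa using hP1 x
    rw [hL, hR] at h1
    linarith
  -- Step B : g > 0 everywhere  (perturbation argument)
  have hgpos : ∀ x, 0 < g zs Qs x := by
    intro x0
    rcases (hfeas x0).lt_or_eq with hlt | heq0
    · exact hlt
    exfalso
    set S : ℝ := ∑ y, g zs Qs y with hSdef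
    set Z : Finset 𝒳 := Finset.univ.filter (fun x => g zs Qs x = 0) with hZdef
    set T : Finset 𝒳 := Finset.univ.filter (fun x => ¬ g zs Qs x = 0) with hTdef
    have hx0Z : x0 ∈ Z := by
      rw [hZdef, Finset.mem_filter]
      exact ⟨Finset.mem_univ x0, heq0.symm⟩
    set b : 𝒳 → ℝ := fun x => (1 + zs^2/2)*P x - g zs Qs x with hbdef
    set c : 𝒳 → ℝ := fun x => -(zs^2/2)*P x with hcdef
    set B : ℝ := (1 + zs^2/2) - S with hBdef
    set C : ℝ := -(zs^2/2) with hCdef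
    have hbsum : ∑ x, b x = B := by
      simp only [hbdef]
      rw [Finset.sum_sub_distrib, ← Finset.mul_sum, hPsum, mul_one, ← hSdef, hBdef]
    have hcsum : ∑ x, c x = C := by
      simp only [hcdef]
      rw [← Finset.mul_sum, hPsum, mul_one, hCdef]
    have hgu : ∀ (u : ℝ) x, g ((1-u)*zs) Qs x = g zs Qs x + b x*u + c x*u^2 := by
      intro u x
      simp only [hbdef, hcdef]
      rw [hg2, hg2]
      ring
    have hid : ∀ (u : ℝ) x, g zs Qs x + b x*u + c x*u^2
        = (1-u)*g zs Qs x + u*((1 + (1-u)*zs^2/2)*P x) := by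
      intro u x
      simp only [hbdef, hcdef]
      ring
    have hgu_pos : ∀ (u : ℝ), 0 < u → u ≤ 1 → ∀ x, 0 < g zs Qs x + b x*u + c x*u^2 := by
      intro u hu hu1 x
      rw [hid u x]
      have h1 := hfeas x
      have h2 := hP x
      nlinarith [mul_nonneg (by linarith : (0:ℝ) ≤ 1-u) h1, mul_pos hu h2,
        mul_nonneg (mul_nonneg hu.le (by linarith : (0:ℝ) ≤ 1-u))
          (mul_nonneg (sq_nonneg zs) h2.le)]
    have hSu : ∀ u : ℝ, ∑ x, (g zs Qs x + b x*u + c x*u^2) = S + B*u + C*u^2 := by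
      intro u
      rw [Finset.sum_add_distrib, Finset.sum_add_distrib, ← Finset.sum_mul, ← Finset.sum_mul,
        hbsum, hcsum, ← hSdef]
    set Fb : ℝ → ℝ := fun u => ∑ x, (g zs Qs x + b x*u + c x*u^2) *
        ((Real.log (S + B*u + C*u^2) - Real.log (g zs Qs x + b x*u + c x*u^2)) / Real.log 2)
      with hFdef
    have hFb0 : Fb 0 = ∑ x, g zs Qs x * Real.logb 2 (S / g zs Qs x) := by
      simp only [hFdef]
      apply Finset.sum_congr rfl
      intro x _
      rcases eq_or_ne (g zs Qs x) 0 with hx | hx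
      · rw [hx]; norm_num
      · rw [show g zs Qs x + b x*(0:ℝ) + c x*(0:ℝ)^2 = g zs Qs x from by ring,
          show S + B*(0:ℝ) + C*(0:ℝ)^2 = S from by ring,
          Real.logb, Real.log_div hS0.ne' hx]
    have hFble : ∀ u : ℝ, 0 < u → u ≤ 1 → Fb u ≤ Fb 0 := by
      intro u hu hu1
      have hz' : 0 ≤ (1-u)*zs := mul_nonneg (by linarith) hzs
      have hfeas' : ∀ x, 0 ≤ g ((1-u)*zs) Qs x := fun x => by
        rw [hgu u x]; exact (hgu_pos u hu hu1 x).le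
      have happ := hmax ((1-u)*zs) Qs hz' hQs hQssum hfeas'
      have hSupos : 0 < S + B*u + C*u^2 := by
        rw [← hSu u]
        exact Finset.sum_pos (fun y _ => hgu_pos u hu hu1 y) Finset.univ_nonempty
      have hL : ∑ x, g ((1-u)*zs) Qs x *
            Real.logb 2 ((∑ x', g ((1-u)*zs) Qs x') / g ((1-u)*zs) Qs x) = Fb u := by
        have hsum_eq : ∑ x', g ((1-u)*zs) Qs x' = S + B*u + C*u^2 := by
          rw [Finset.sum_congr rfl (fun x _ => hgu u x), hSu u]
        simp only [hFdef]
        apply Finset.sum_congr rfl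
        intro x _
        rw [hgu u x, hsum_eq, Real.logb, Real.log_div hSupos.ne' (hgu_pos u hu hu1 x).ne']
      rw [hL, ← hFb0] at happ
      exact happ
    -- derivative of the T-part
    have hT : ∀ x ∈ T, g zs Qs x ≠ 0 := by
      intro x hx
      rw [hTdef, Finset.mem_filter] at hx
      exact hx.2
    set AA : ℝ → ℝ := fun u => ∑ x ∈ T, (g zs Qs x + b x*u + c x*u^2) *
        ((Real.log (S + B*u + C*u^2) - Real.log (g zs Qs x + b x*u + c x*u^2)) / Real.log 2)
      with hAAdef
    set DT : ℝ := ∑ x ∈ T, (b x * ((Real.log S - Real.log (g zs Qs x))/Real.log 2)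
        + g zs Qs x * ((B/S - b x / g zs Qs x)/Real.log 2)) with hDTdef
    have hDT : HasDerivAt AA DT 0 := hasDerivAt_F T (fun x => g zs Qs x) b c S B C hS0.ne' hT
    have hslopeT : Filter.Tendsto (fun u => (AA u - AA 0)/u) (nhdsWithin 0 (Set.Ioi 0)) (nhds DT) := by
      have h1 := hasDerivAt_iff_tendsto_slope.mp hDT
      have hmono : nhdsWithin (0:ℝ) (Set.Ioi 0) ≤ nhdsWithin (0:ℝ) {(0:ℝ)}ᶜ := by
        apply nhdsWithin_mono
        intro x hx
        simp only [Set.mem_compl_iff, Set.mem_singleton_iff]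
        exact ne_of_gt hx
      refine Filter.Tendsto.congr (fun u => ?_) (h1.mono_left hmono)
      rw [slope_def_field, sub_zero]
    -- the singular part
    set W : 𝒳 → ℝ → ℝ := fun x u => (b x + c x*u) *
        ((Real.log (S + B*u + C*u^2) - Real.log (u*(b x + c x*u)))/Real.log 2) with hWdef
    have hbZpos : ∀ x ∈ Z, 0 < b x := by
      intro x hx
      rw [hZdef, Finset.mem_filter] at hx
      simp only [hbdef]
      rw [hx.2]
      nlinarith [hP x, sq_nonneg zs]
    have hWtend : ∀ x ∈ Z, Filter.Tendsto (W x) (nhdsWithin 0 (Set.Ioi 0)) Filter.atTop := by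
      intro x hx
      have hbx := hbZpos x hx
      have hcont1 : Filter.Tendsto (fun u : ℝ => b x + c x*u) (nhdsWithin 0 (Set.Ioi 0)) (nhds (b x)) := by
        have hc : Continuous (fun u : ℝ => b x + c x*u) :=
          continuous_const.add (continuous_const.mul continuous_id)
        have := (hc.tendsto 0).mono_left (nhdsWithin_le_nhds (s := Set.Ioi (0:ℝ)))
        simpa using this
      have hpoly : Filter.Tendsto (fun u : ℝ => S + B*u + C*u^2) (nhdsWithin 0 (Set.Ioi 0)) (nhds S) := by
        have hc : Continuous (fun u : ℝ => S + B*u + C*u^2) :=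
          (continuous_const.add (continuous_const.mul continuous_id)).add
            (continuous_const.mul (continuous_pow 2))
        have := (hc.tendsto 0).mono_left (nhdsWithin_le_nhds (s := Set.Ioi (0:ℝ)))
        simpa using this
      have hlogS : Filter.Tendsto (fun u : ℝ => Real.log (S + B*u + C*u^2))
          (nhdsWithin 0 (Set.Ioi 0)) (nhds (Real.log S)) :=
        (Real.continuousAt_log hS0.ne').tendsto.comp hpoly
      -- inner argument tends to 0 within positives
      have hargpos : ∀ᶠ u in nhdsWithin (0:ℝ) (Set.Ioi 0), 0 < u*(b x + c x*u) := by
        have hbc : ∀ᶠ u in nhdsWithin (0:ℝ) (Set.Ioi 0), 0 < b x + c x*u :=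
          hcont1.eventually (eventually_gt_nhds hbx)
        filter_upwards [hbc, self_mem_nhdsWithin] with u h1 h2
        exact mul_pos h2 h1
      have hargto : Filter.Tendsto (fun u : ℝ => u*(b x + c x*u))
          (nhdsWithin 0 (Set.Ioi 0)) (nhdsWithin 0 {(0:ℝ)}ᶜ) := by
        rw [tendsto_nhdsWithin_iff]
        constructor
        · have hc : Continuous (fun u : ℝ => u*(b x + c x*u)) :=
            continuous_id.mul (continuous_const.add (continuous_const.mul continuous_id))
          have := (hc.tendsto 0).mono_left (nhdsWithin_le_nhds (s := Set.Ioi (0:ℝ)))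
          simpa using this
        · filter_upwards [hargpos] with u hu
          simp only [Set.mem_compl_iff, Set.mem_singleton_iff]
          exact ne_of_gt hu
      have hlogarg : Filter.Tendsto (fun u : ℝ => Real.log (u*(b x + c x*u)))
          (nhdsWithin 0 (Set.Ioi 0)) Filter.atBot :=
        Real.tendsto_log_nhdsNE_zero.comp hargto
      have hneg : Filter.Tendsto (fun u : ℝ => -Real.log (u*(b x + c x*u)))
          (nhdsWithin 0 (Set.Ioi 0)) Filter.atTop :=
        Filter.tendsto_neg_atBot_atTop.comp hlogarg
      have hdiff : Filter.Tendsto (fun u : ℝ =>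
          (Real.log (S + B*u + C*u^2) - Real.log (u*(b x + c x*u))))
          (nhdsWithin 0 (Set.Ioi 0)) Filter.atTop := by
        have := Filter.Tendsto.add_atTop hlogS hneg
        refine this.congr (fun u => ?_)
        ring
      have hdiv := hdiff.atTop_div_const hlog2
      exact Filter.Tendsto.pos_mul_atTop hbx hcont1 hdiv
    have hsumW := tendsto_sum_atTop Z ⟨x0, hx0Z⟩ W hWtend
    -- decomposition of the slope
    have hFb0AA : Fb 0 = AA 0 := by
      simp only [hFdef, hAAdef]
      rw [← Finset.sum_filter_add_sum_filter_not Finset.univ (fun x => g zs Qs x = 0)]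
      rw [← hZdef, ← hTdef]
      have hZ0 : ∑ x ∈ Z, (g zs Qs x + b x*(0:ℝ) + c x*(0:ℝ)^2) *
          ((Real.log (S + B*(0:ℝ) + C*(0:ℝ)^2) - Real.log (g zs Qs x + b x*(0:ℝ) + c x*(0:ℝ)^2)) / Real.log 2) = 0 := by
        apply Finset.sum_eq_zero
        intro x hx
        rw [hZdef, Finset.mem_filter] at hx
        rw [hx.2]
        norm_num
      rw [hZ0, zero_add]
    have hdecomp : ∀ u : ℝ, 0 < u → (Fb u - Fb 0)/u = (AA u - AA 0)/u + ∑ x ∈ Z, W x u := by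
      intro u hu
      have h1 : Fb u = AA u + u * ∑ x ∈ Z, W x u := by
        simp only [hFdef, hAAdef]
        rw [← Finset.sum_filter_add_sum_filter_not Finset.univ (fun x => g zs Qs x = 0)]
        rw [← hZdef, ← hTdef]
        rw [Finset.mul_sum]
        have hZterm : ∀ x ∈ Z, (g zs Qs x + b x*u + c x*u^2) *
            ((Real.log (S + B*u + C*u^2) - Real.log (g zs Qs x + b x*u + c x*u^2)) / Real.log 2)
            = u * W x u := by
          intro x hx
          rw [hZdef, Finset.mem_filter] at hx
          rw [hx.2]
          rw [show (0:ℝ) + b x*u + c x*u^2 = u*(b x + c x*u) from by ring]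
          simp only [hWdef]
          ring
        rw [Finset.sum_congr rfl hZterm]
        ring
      rw [h1, hFb0AA]
      field_simp
      ring
    have htot : Filter.Tendsto (fun u => (Fb u - Fb 0)/u) (nhdsWithin 0 (Set.Ioi 0)) Filter.atTop := by
      have hadd := Filter.Tendsto.add_atTop hslopeT hsumW
      refine hadd.congr' ?_
      filter_upwards [self_mem_nhdsWithin] with u hu
      exact (hdecomp u hu).symm
    have hev1 := htot.eventually_gt_atTop 0
    have hev2 : ∀ᶠ u in nhdsWithin (0:ℝ) (Set.Ioi 0), (Fb u - Fb 0)/u ≤ 0 := by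
      have hmem : Set.Ioc (0:ℝ) 1 ∈ nhdsWithin (0:ℝ) (Set.Ioi 0) :=
        Ioc_mem_nhdsGT (by norm_num)
      filter_upwards [hmem] with u hu
      apply div_nonpos_of_nonpos_of_nonneg
      · linarith [hFble u hu.1 hu.2]
      · exact hu.1.le
    obtain ⟨u, h1, h2⟩ := (hev1.and hev2).exists
    linarith
  -- basic facts about Pstar / ℓstar
  have hgle : ∀ x, g zs Qs x ≤ ∑ x', g zs Qs x' := by
    intro x
    exact Finset.single_le_sum (fun y _ => (hfeas y)) (Finset.mem_univ x)
  have hPstar_pos : ∀ x, 0 < Pstar x := by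
    intro x; rw [hPstar]; exact div_pos (hgpos x) hS0
  have hPstar_le1 : ∀ x, Pstar x ≤ 1 := by
    intro x; rw [hPstar]
    exact div_le_one_of_le₀ (hgle x) hS0.le
  have hℓ0 : ∀ x, 0 ≤ ℓstar x := by
    intro x; rw [hℓstar]
    apply Real.logb_nonneg (by norm_num)
    rw [le_div_iff₀ (hPstar_pos x)]
    simpa using hPstar_le1 x
  have h2pow : ∀ x, (2:ℝ) ^ (-ℓstar x) = Pstar x := by
    intro x
    rw [hℓstar]
    have : -Real.logb 2 (1 / Pstar x) = Real.logb 2 (Pstar x) := by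
      rw [← Real.logb_inv, one_div, inv_inv]
    rw [this]
    exact Real.rpow_logb (by norm_num) (by norm_num) (hPstar_pos x)
  have hPstarsum : ∑ x, Pstar x = 1 := by
    rw [hPstar]
    rw [← Finset.sum_div]
    exact div_self hS0.ne'
  have hkraftstar : ∑ x, (2:ℝ) ^ (-ℓstar x) ≤ 1 := by
    rw [Finset.sum_congr rfl (fun x _ => h2pow x), hPstarsum]
  -- ℓstar in log form
  have hℓeq : ∀ x, ℓstar x = Real.logb 2 ((∑ x', g zs Qs x') / g zs Qs x) := by
    intro x
    simp only [hℓstar, hPstar]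
    rw [one_div_div]
  -- m* > 0
  have hms : 0 < ∑ x, P x * ℓstar x := by
    obtain ⟨x, y, hxy⟩ := Fintype.exists_pair_of_one_lt_card (α := 𝒳) (by omega)
    have hlt : g zs Qs x < ∑ x', g zs Qs x' := by
      have h1 : g zs Qs x + g zs Qs y ≤ ∑ z, g zs Qs z := by
        have := Finset.sum_le_sum_of_subset_of_nonneg (Finset.subset_univ ({x, y} : Finset 𝒳))
          (fun z _ _ => hfeas z)
        rwa [Finset.sum_pair hxy] at this
      linarith [hgpos y]
    have hPlt : Pstar x < 1 := by
      simp only [hPstar]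
      exact (div_lt_one hS0).mpr hlt
    have hpx : 0 < ℓstar x := by
      simp only [hℓstar]
      apply Real.logb_pos (by norm_num)
      rw [lt_div_iff₀ (hPstar_pos x)]
      simpa using hPlt
    apply Finset.sum_pos' (fun z _ => mul_nonneg (hP z).le (hℓ0 z))
    exact ⟨x, Finset.mem_univ x, mul_pos (hP x) hpx⟩
  set ms := ∑ x, P x * ℓstar x with hmsdef
  set ts : 𝒳 → ℝ := fun x => zs * Real.sqrt (Qs x / P x) with htsdef
  set τ : 𝒳 → ℝ := fun x => ℓstar x / ms with hτdef
  have hts0 : ∀ x, 0 ≤ ts x := fun x => mul_nonneg hzs (Real.sqrt_nonneg _)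
  have hτ0 : ∀ x, 0 ≤ τ x := fun x => div_nonneg (hℓ0 x) hms.le
  have hsqrt_div : ∀ x, Real.sqrt (Qs x / P x) = Real.sqrt (Qs x * P x) / P x := by
    intro x
    rw [show Qs x / P x = Qs x * P x / P x ^ 2 from
        (by rw [pow_two, mul_div_mul_right _ _ (hP x).ne'] :
          Qs x * P x / P x ^ 2 = Qs x / P x).symm,
      Real.sqrt_div (mul_nonneg (hQs x) (hP x).le), Real.sqrt_sq (hP x).le]
  have hPts : ∀ x, P x * ts x = zs * Real.sqrt (Qs x * P x) := by
    intro x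
    have hPne := (hP x).ne'
    simp only [htsdef, hsqrt_div]
    field_simp
  have hts_sq : ∀ x, P x * ts x ^ 2 = zs^2 * Qs x := by
    intro x
    have hPne := (hP x).ne'
    have h1 : Real.sqrt (Qs x * P x) ^ 2 = Qs x * P x :=
      Real.sq_sqrt (mul_nonneg (hQs x) (hP x).le)
    simp only [htsdef, hsqrt_div]
    rw [mul_pow, div_pow, h1]
    field_simp
  have hq0sum : ∑ x, P x * ts x ^ 2 = zs ^ 2 := by
    rw [Finset.sum_congr rfl (fun x _ => hts_sq x), ← Finset.mul_sum, hQssum, mul_one]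
  have hgdecomp : ∀ x, g zs Qs x = P x * (1 - (∑ y, P y * ts y^2)/2 + ts x) := by
    intro x
    rw [hq0sum, hg2]
    linear_combination (-1 : ℝ) * hPts x
  -- Step C : fixed point, ts = τ
  have hfix : ∀ x, ts x = τ x := by
    by_contra hcon
    push_neg at hcon
    obtain ⟨x1, hx1⟩ := hcon
    set δ : 𝒳 → ℝ := fun x => τ x - ts x with hδdef
    set q0 : ℝ := ∑ y, P y * ts y ^ 2 with hq0def
    set q1 : ℝ := ∑ y, P y * (ts y * δ y) with hq1def
    set q2 : ℝ := ∑ y, P y * δ y ^ 2 with hq2def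
    set qτ : ℝ := ∑ y, P y * τ y ^ 2 with hqτdef
    set M1 : ℝ := ∑ y, P y * δ y with hM1def
    set A : ℝ := ∑ y, g zs Qs y with hAdef
    set B : ℝ := M1 - q1 with hBdef
    set C : ℝ := -q2/2 with hCdef
    set b : 𝒳 → ℝ := fun x => P x * (δ x - q1) with hbdef
    set c : 𝒳 → ℝ := fun x => -(P x * q2)/2 with hcdef
    have hδx1 : δ x1 ≠ 0 := by
      simp only [hδdef]
      intro h
      apply hx1
      linarith [sub_eq_zero.mp h]
    have hq2pos : 0 < q2 := by
      apply Finset.sum_pos' (fun y _ => mul_nonneg (hP y).le (sq_nonneg _))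
      exact ⟨x1, Finset.mem_univ x1, mul_pos (hP x1) (by positivity)⟩
    -- expansion of the quadratic sums
    have hqu : ∀ u : ℝ, ∑ y, P y * (ts y + u * δ y)^2 = q0 + 2*q1*u + q2*u^2 := by
      intro u
      have : ∀ y : 𝒳, P y * (ts y + u * δ y)^2
          = P y * ts y ^2 + (2*u) * (P y * (ts y * δ y)) + u^2 * (P y * δ y ^2) := by
        intro y; ring
      rw [Finset.sum_congr rfl (fun y _ => this y), Finset.sum_add_distrib,
        Finset.sum_add_distrib, ← Finset.mul_sum, ← Finset.mul_sum,
        ← hq0def, ← hq1def, ← hq2def]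
      ring
    have hGu : ∀ (u : ℝ) (x : 𝒳),
        P x * (1 - (∑ y, P y * (ts y + u * δ y)^2)/2 + (ts x + u * δ x))
        = g zs Qs x + b x * u + c x * u^2 := by
      intro u x
      rw [hqu u, hgdecomp x]
      simp only [hbdef, hcdef]
      ring
    have hbsum : ∑ x, b x = B := by
      have : ∀ x : 𝒳, b x = P x * δ x - q1 * P x := by
        intro x; simp only [hbdef]; ring
      rw [Finset.sum_congr rfl (fun x _ => this x), Finset.sum_sub_distrib,
        ← Finset.mul_sum, hPsum, ← hM1def, mul_one, hBdef]
    have hcsum : ∑ x, c x = C := by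
      have : ∀ x : 𝒳, c x = (-q2/2) * P x := by
        intro x; simp only [hcdef]; ring
      rw [Finset.sum_congr rfl (fun x _ => this x), ← Finset.mul_sum, hPsum, mul_one, hCdef]
    have hSu : ∀ u : ℝ, ∑ x, (g zs Qs x + b x * u + c x * u^2) = A + B*u + C*u^2 := by
      intro u
      rw [Finset.sum_add_distrib, Finset.sum_add_distrib, ← Finset.sum_mul, ← Finset.sum_mul,
        hbsum, hcsum, ← hAdef]
    -- the convexity bound for feasibility
    have hconv : ∀ u : ℝ, 0 ≤ u → u ≤ 1 → ∀ y : 𝒳,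
        P y * (ts y + u * δ y)^2 ≤ (1-u) * (P y * ts y^2) + u * (P y * τ y^2) := by
      intro u hu hu1 y
      have hid : (1-u) * (P y * ts y^2) + u * (P y * τ y^2) - P y * (ts y + u * δ y)^2
          = u * (1-u) * (P y * (ts y - τ y)^2) := by
        simp only [hδdef]; ring
      nlinarith [mul_nonneg (mul_nonneg hu (by linarith : (0:ℝ) ≤ 1 - u))
        (mul_nonneg (hP y).le (sq_nonneg (ts y - τ y))), hid]
    -- uniform positivity radius
    have hKpos : ∀ x, 0 < 1 - q0/2 + ts x := by
      intro x
      have h := hgpos x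
      rw [hgdecomp x] at h
      nlinarith [h, hP x]
    set Kmin : ℝ := Finset.univ.inf' Finset.univ_nonempty (fun x => 1 - q0/2 + ts x) with hKdef
    set Mmin : ℝ := Finset.univ.inf' Finset.univ_nonempty (fun x => 1 - qτ/2 + τ x) with hMdef
    have hKminpos : 0 < Kmin := by
      rw [hKdef, Finset.lt_inf'_iff]
      exact fun x _ => hKpos x
    set u0 : ℝ := min (1/2) (Kmin / (2*(Kmin + |Mmin| + 1))) with hu0def
    have hu0pos : 0 < u0 := by
      apply lt_min (by norm_num)
      apply div_pos hKminpos
      have := abs_nonneg Mmin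
      linarith
    have hu0le : u0 ≤ 1/2 := min_le_left _ _
    -- positivity along the path
    have hupos : ∀ u, 0 < u → u ≤ u0 → ∀ x, 0 < g zs Qs x + b x * u + c x * u^2 := by
      intro u hu huu0 x
      rw [← hGu u x]
      apply mul_pos (hP x)
      have hsum_le : ∑ y, P y * (ts y + u * δ y)^2 ≤ (1-u)*q0 + u*qτ := by
        have h := Finset.sum_le_sum (fun y (_ : y ∈ Finset.univ) =>
          hconv u hu.le (by linarith) y)
        rwa [Finset.sum_add_distrib, ← Finset.mul_sum, ← Finset.mul_sum,
          ← hq0def, ← hqτdef] at h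
      have h1 : 1 - (∑ y, P y * (ts y + u * δ y)^2)/2 + (ts x + u * δ x)
          ≥ (1-u)*(1 - q0/2 + ts x) + u*(1 - qτ/2 + τ x) := by
        have : ts x + u * δ x = (1-u)*ts x + u * τ x := by simp only [hδdef]; ring
        rw [this]
        nlinarith [hsum_le]
      have h2 : Kmin ≤ 1 - q0/2 + ts x := by
        rw [hKdef]
        exact Finset.inf'_le _ (Finset.mem_univ x)
      have h3 : Mmin ≤ 1 - qτ/2 + τ x := by
        rw [hMdef]
        exact Finset.inf'_le _ (Finset.mem_univ x)
      have h4 : u ≤ Kmin / (2*(Kmin + |Mmin| + 1)) := le_trans huu0 (min_le_right _ _)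
      have h5 : -|Mmin| ≤ Mmin := neg_abs_le Mmin
      have h6 : 0 ≤ |Mmin| := abs_nonneg Mmin
      have h7 : u * (2*(Kmin + |Mmin| + 1)) ≤ Kmin := by
        rw [le_div_iff₀ (by linarith : (0:ℝ) < 2*(Kmin + |Mmin| + 1))] at h4
        exact h4
      nlinarith [h1, h2, h3, h5, h6, h7, hu, hu0le, huu0, hKminpos]
    -- the path stays admissible for hmax
    have hφle : ∀ u, 0 < u → u ≤ u0 →
        ∑ x, (g zs Qs x + b x * u + c x * u^2) *
          ((Real.log (A + B*u + C*u^2) - Real.log (g zs Qs x + b x * u + c x * u^2))/Real.log 2)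
        ≤ ∑ x, g zs Qs x * Real.logb 2 ((∑ x', g zs Qs x') / g zs Qs x) := by
      intro u hu huu0
      have hu1 : u ≤ (1:ℝ)/2 := le_trans huu0 hu0le
      set tu : 𝒳 → ℝ := fun x => ts x + u * δ x with htudef
      have htu0 : ∀ x, 0 ≤ tu x := by
        intro x
        have : tu x = (1-u)*ts x + u * τ x := by simp only [htudef, hδdef]; ring
        rw [this]
        have := hts0 x; have := hτ0 x
        nlinarith
      have hqupos : 0 < q0 + 2*q1*u + q2*u^2 := by
        rw [← hqu u]
        apply Finset.sum_pos' (fun y _ => mul_nonneg (hP y).le (sq_nonneg _))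
        refine ⟨x1, Finset.mem_univ x1, mul_pos (hP x1) ?_⟩
        have htspos : ts x1 ≠ τ x1 := hx1
        rcases (hts0 x1).lt_or_eq with h | h
        · have : 0 < tu x1 := by
            have e : tu x1 = (1-u)*ts x1 + u * τ x1 := by simp only [htudef, hδdef]; ring
            rw [e]; nlinarith [hτ0 x1]
          positivity
        · have hτpos : 0 < τ x1 := by
            rcases (hτ0 x1).lt_or_eq with h2 | h2
            · exact h2
            · exact absurd (by rw [← h, ← h2] : ts x1 = τ x1) hx1
          have : 0 < tu x1 := by
            have e : tu x1 = (1-u)*ts x1 + u * τ x1 := by simp only [htudef, hδdef]; ring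
            rw [e, ← h]; nlinarith
          positivity
      set zu : ℝ := Real.sqrt (q0 + 2*q1*u + q2*u^2) with hzudef
      have hzupos : 0 < zu := Real.sqrt_pos.mpr hqupos
      have hzusq : zu^2 = q0 + 2*q1*u + q2*u^2 := Real.sq_sqrt hqupos.le
      set Qu : 𝒳 → ℝ := fun x => P x * tu x^2 / (q0 + 2*q1*u + q2*u^2) with hQudef
      have hQu0 : ∀ x, 0 ≤ Qu x := by
        intro x
        apply div_nonneg _ hqupos.le
        exact mul_nonneg (hP x).le (sq_nonneg _)
      have hQusum : ∑ x, Qu x = 1 := by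
        simp only [hQudef]
        rw [← Finset.sum_div]
        have hsumtu : ∑ x, P x * tu x ^2 = q0 + 2*q1*u + q2*u^2 := by
          calc ∑ x, P x * tu x ^2 = ∑ x, P x * (ts x + u * δ x)^2 :=
                Finset.sum_congr rfl (fun x _ => by simp only [htudef])
            _ = q0 + 2*q1*u + q2*u^2 := hqu u
        rw [hsumtu]
        exact div_self hqupos.ne'
      have hgzu : ∀ x, g zu Qu x = g zs Qs x + b x * u + c x * u^2 := by
        intro x
        rw [hg2, hzusq]
        have hsq : Real.sqrt (Qu x * P x) = P x * tu x / zu := by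
          have e1 : Qu x * P x = (P x * tu x)^2 / (q0 + 2*q1*u + q2*u^2) := by
            simp only [hQudef]; field_simp
          rw [e1, Real.sqrt_div (sq_nonneg _),
            Real.sqrt_sq (mul_nonneg (hP x).le (htu0 x)), ← hzudef]
        rw [hsq]
        have : zu * (P x * tu x / zu) = P x * tu x := by
          field_simp
        rw [this, ← hGu u x, hqu u]
        simp only [htudef]
        ring
      have hfeasu : ∀ x, 0 ≤ g zu Qu x := by
        intro x
        rw [hgzu x]
        exact (hupos u hu huu0 x).le
      have happ := hmax zu Qu hzupos.le hQu0 hQusum hfeasu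
      have hLHS : ∑ x, g zu Qu x * Real.logb 2 ((∑ x', g zu Qu x') / g zu Qu x)
          = ∑ x, (g zs Qs x + b x * u + c x * u^2) *
            ((Real.log (A + B*u + C*u^2) - Real.log (g zs Qs x + b x * u + c x * u^2))/Real.log 2) := by
        have hsum_eq : ∑ x', g zu Qu x' = A + B*u + C*u^2 := by
          rw [Finset.sum_congr rfl (fun x _ => hgzu x), hSu u]
        apply Finset.sum_congr rfl
        intro x _
        rw [hgzu x, hsum_eq, Real.logb, Real.log_div ?num ?den]
        · have := hSu u
          have hApos : 0 < A + B*u + C*u^2 := by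
            rw [← this]
            exact Finset.sum_pos (fun y _ => hupos u hu huu0 y) Finset.univ_nonempty
          exact hApos.ne'
        · exact (hupos u hu huu0 x).ne'
      rw [hLHS] at happ
      exact happ
    -- derivative of φ at 0
    have hD := hasDerivAt_F Finset.univ (fun x => g zs Qs x) b c A B C hS0.ne'
      (fun x _ => (hgpos x).ne')
    set D : ℝ := ∑ x, (b x * ((Real.log A - Real.log (g zs Qs x))/Real.log 2)
        + g zs Qs x * ((B/A - b x / g zs Qs x)/Real.log 2)) with hDdef
    set φ : ℝ → ℝ := fun u => ∑ x, (g zs Qs x + b x*u + c x*u^2) *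
        ((Real.log (A + B*u + C*u^2) - Real.log (g zs Qs x + b x*u + c x*u^2)) / Real.log 2)
      with hφdef
    have hDφ : HasDerivAt φ D 0 := hD
    -- φ 0 is the max value
    have hφ0 : φ 0 = ∑ x, g zs Qs x * Real.logb 2 ((∑ x', g zs Qs x') / g zs Qs x) := by
      simp only [hφdef]
      apply Finset.sum_congr rfl
      intro x _
      rw [show g zs Qs x + b x*(0:ℝ) + c x*(0:ℝ)^2 = g zs Qs x from by ring,
        show A + B*(0:ℝ) + C*(0:ℝ)^2 = A from by ring,
        Real.logb, Real.log_div hS0.ne' (hgpos x).ne']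
    -- slope inequality
    have hslope : Filter.Tendsto (fun u => (φ u - φ 0)/u) (nhdsWithin 0 (Set.Ioi 0)) (nhds D) := by
      have h1 := hasDerivAt_iff_tendsto_slope.mp hDφ
      have hmono : nhdsWithin (0:ℝ) (Set.Ioi 0) ≤ nhdsWithin (0:ℝ) {(0:ℝ)}ᶜ := by
        apply nhdsWithin_mono
        intro x hx
        simp only [Set.mem_compl_iff, Set.mem_singleton_iff]
        exact ne_of_gt hx
      refine Filter.Tendsto.congr (fun u => ?_) (h1.mono_left hmono)
      rw [slope_def_field, sub_zero]
    have hDle : D ≤ 0 := by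
      apply le_of_tendsto hslope
      have hmem : Set.Ioc (0:ℝ) u0 ∈ nhdsWithin (0:ℝ) (Set.Ioi 0) :=
        Ioc_mem_nhdsGT hu0pos
      filter_upwards [hmem] with u hu
      apply div_nonpos_of_nonpos_of_nonneg
      · have h1 : φ u ≤ φ 0 := by
          rw [hφ0]
          simp only [hφdef]
          exact hφle u hu.1 hu.2
        linarith
      · exact hu.1.le
    -- compute D
    have hℓlog : ∀ x, (Real.log A - Real.log (g zs Qs x))/Real.log 2 = ℓstar x := by
      intro x
      rw [hℓeq x, Real.logb, Real.log_div hS0.ne' (hgpos x).ne']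
    have hsecond : ∑ x, g zs Qs x * ((B/A - b x / g zs Qs x)/Real.log 2) = 0 := by
      have : ∀ x : 𝒳, g zs Qs x * ((B/A - b x / g zs Qs x)/Real.log 2)
          = (g zs Qs x * (B/A) - b x)/Real.log 2 := by
        intro x
        have hgx := (hgpos x).ne'
        field_simp
      rw [Finset.sum_congr rfl (fun x _ => this x), ← Finset.sum_div,
        Finset.sum_sub_distrib, ← Finset.sum_mul, ← hAdef, hbsum]
      rw [mul_div_assoc']
      rw [mul_div_cancel_left₀ _ hS0.ne']
      simp
    have hℓτ : ∀ x, ℓstar x = ms * τ x := by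
      intro x
      simp only [hτdef]
      field_simp
    have hDval : D = ms * q2 := by
      rw [hDdef, Finset.sum_add_distrib, hsecond, add_zero]
      have hterm : ∀ x : 𝒳, b x * ((Real.log A - Real.log (g zs Qs x))/Real.log 2)
          = ms * (P x * (ts x * δ x)) + ms * (P x * δ x^2) - q1 * (P x * ℓstar x) := by
        intro x
        rw [hℓlog x]
        simp only [hbdef]
        rw [hℓτ x]
        simp only [hδdef]
        ring
      rw [Finset.sum_congr rfl (fun x _ => hterm x), Finset.sum_sub_distrib,
        Finset.sum_add_distrib, ← Finset.mul_sum, ← Finset.mul_sum, ← Finset.mul_sum,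
        ← hq1def, ← hq2def, ← hmsdef]
      ring
    rw [hDval] at hDle
    exact absurd hDle (not_le.mpr (mul_pos hms hq2pos))
  -- reassemble: g* = P(1 - q/2 + τ)
  have hgdecomp' : ∀ x, g zs Qs x = P x * (1 - (∑ y, P y * τ y^2)/2 + τ x) := by
    intro x
    rw [hgdecomp x]
    have h1 : ∑ y, P y * ts y ^2 = ∑ y, P y * τ y^2 :=
      Finset.sum_congr rfl (fun y _ => by rw [hfix y])
    rw [h1, hfix x]
  -- cost of ℓstar equals the linear functional at ℓstar
  have hτℓ : ∀ x, τ x = ℓstar x / ms := fun x => rfl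
  have hcost_eq : ∑ x, g zs Qs x * ℓstar x
      = ms + (∑ x, P x * ℓstar x ^ 2) / (2 * ms) := by
    have hq : ∑ y, P y * τ y^2 = (∑ y, P y * ℓstar y^2) / ms^2 := by
      rw [Finset.sum_div]
      apply Finset.sum_congr rfl
      intro y _
      rw [hτℓ]
      field_simp
    have hlin : ∑ x, g zs Qs x * ℓstar x
        = (1 - (∑ y, P y * ℓstar y^2) / ms^2 / 2) * ms + (∑ x, P x * ℓstar x ^2) / ms := by
      rw [Finset.sum_congr rfl (fun x _ => by rw [hgdecomp' x])]
      have : ∀ x, P x * (1 - (∑ y, P y * τ y^2)/2 + τ x) * ℓstar x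
          = (1 - (∑ y, P y * τ y^2)/2) * (P x * ℓstar x) + (P x * ℓstar x^2)/ms := by
        intro x
        rw [hτℓ]
        field_simp
      rw [Finset.sum_congr rfl (fun x _ => this x), Finset.sum_add_distrib,
        ← Finset.mul_sum, ← Finset.sum_div, hq, ← hmsdef]
    rw [hlin]
    field_simp
    ring
  refine ⟨⟨hℓ0, hkraftstar⟩, ?_⟩
  intro ℓ hℓpos hkraft
  -- m(ℓ) > 0
  have hmℓ : 0 < ∑ x, P x * ℓ x := by
    rcases (Finset.sum_nonneg (fun x _ => mul_nonneg (hP x).le (hℓpos x))).lt_or_eq with h | h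
    · exact h
    exfalso
    have hz : ∀ x, ℓ x = 0 := by
      intro x
      have h0 := (Finset.sum_eq_zero_iff_of_nonneg
        (fun x _ => mul_nonneg (hP x).le (hℓpos x))).mp h.symm x (Finset.mem_univ x)
      have := hP x
      rcases mul_eq_zero.mp h0 with h | h
      · linarith
      · exact h
    have hone : ∀ x : 𝒳, (2:ℝ) ^ (-ℓ x) = 1 := by
      intro x; rw [hz x]; norm_num
    have : ∑ x, (2:ℝ) ^ (-ℓ x) = (Fintype.card 𝒳 : ℝ) := by
      rw [Finset.sum_congr rfl (fun x _ => hone x), Finset.sum_const,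
        Finset.card_univ, nsmul_eq_mul, mul_one]
    rw [this] at hkraft
    have : (2:ℝ) ≤ Fintype.card 𝒳 := by exact_mod_cast hcard
    linarith
  -- the chain
  have hchain1 : ∑ x, g zs Qs x * ℓ x ≤
      (∑ x, P x * ℓ x) + (∑ x, P x * ℓ x ^ 2) / (2 * ∑ x, P x * ℓ x) := by
    have := cost_ge P ℓ τ hP hℓpos hτ0 hmℓ
    calc ∑ x, g zs Qs x * ℓ x
        = ∑ x, (P x * (1 - (∑ y, P y * τ y^2)/2 + τ x)) * ℓ x := by
          apply Finset.sum_congr rfl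
          intro x _
          rw [hgdecomp' x]
      _ ≤ _ := this
  have hgibbs := gibbs (g zs Qs) ℓ hgpos hkraft
  have hmid : ∑ x, g zs Qs x * ℓstar x
      = ∑ x, g zs Qs x * Real.logb 2 ((∑ y, g zs Qs y)/g zs Qs x) := by
    apply Finset.sum_congr rfl
    intro x _
    rw [hℓeq x]
  constructor
  · -- minimality
    rw [← hcost_eq, hmid]
    exact le_trans hgibbs.1 hchain1
  · -- uniqueness
    intro heq
    by_contra hne
    have hex : ∃ x, ℓ x ≠ Real.logb 2 ((∑ y, g zs Qs y)/g zs Qs x) := by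
      by_contra hforall
      push_neg at hforall
      apply hne
      funext x
      rw [hforall x, ← hℓeq x]
    have hstrict := hgibbs.2 hex
    rw [← hmid] at hstrict
    linarith [hchain1, hstrict, heq, hcost_eq]
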